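/- Let λ, μ ∈ (0,∞). For every a, b ∈ [0,1], the small-time asymptotics lim_{T→0⁺} I_{1,T}(a,b) / log(1/T) = |a − b| holds. -/

import Mathlib

set_option maxHeartbeats 1000000


noncomputable section

open MeasureTheory Real Filter

/-- Probability that an initially inactive edge is active at time `t`. -/
def p01 (lam mu t : ℝ) : ℝ := (lam - lam * Real.exp (-(t * (lam + mu)))) / (lam + mu)

/-- Probability that an initially active edge is active at time `t`. -/
def p11 (lam mu t : ℝ) : ℝ := (lam + mu * Real.exp (-(t * (lam + mu)))) / (lam + mu)

/-- The cumulant-type function `J_{t,v}(u)`. -/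
def Jfun (lam mu t v u : ℝ) : ℝ :=
  u * Real.log (1 - p11 lam mu t + Real.exp v * p11 lam mu t) +
  (1 - u) * Real.log (1 - p01 lam mu t + Real.exp v * p01 lam mu t)

/-- The one-step rate function `I_{1,t}(u,x) = sup_v [v x - J_{t,v}(u)]`. -/
def I1 (lam mu t u x : ℝ) : ℝ := ⨆ v : ℝ, (v * x - Jfun lam mu t v u)

lemma log_mix_ge_left (v p : ℝ) (hp : 0 < p) (hp1 : p ≤ 1) :
    v + Real.log p ≤ Real.log (1 - p + Real.exp v * p) := by
  have h1 : Real.log (Real.exp v * p) = v + Real.log p := by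
    rw [Real.log_mul (Real.exp_ne_zero v) hp.ne', Real.log_exp]
  rw [← h1]
  apply Real.log_le_log (by positivity)
  nlinarith [Real.exp_pos v]

lemma log_mix_ge_right (v p : ℝ) (hp : 0 ≤ p) (hp1 : p < 1) :
    Real.log (1 - p) ≤ Real.log (1 - p + Real.exp v * p) := by
  apply Real.log_le_log (by linarith)
  nlinarith [Real.exp_pos v]

lemma pfacts (lam mu t : ℝ) (hlam : 0 < lam) (hmu : 0 < mu) (ht0 : 0 < t) (ht1 : t < 1) :
    lam * t / (1 + (lam+mu)) ≤ p01 lam mu t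
    ∧ p01 lam mu t ≤ lam * t
    ∧ mu * t / (1 + (lam+mu)) ≤ 1 - p11 lam mu t
    ∧ 1 - p11 lam mu t ≤ mu * t
    ∧ lam / (lam + mu) ≤ p11 lam mu t
    ∧ mu / (lam + mu) ≤ 1 - p01 lam mu t := by
  unfold p01 p11
  set s := lam + mu with hs
  have hs0 : 0 < s := by positivity
  set x := t * s with hx
  have hx0 : 0 < x := by positivity
  have hxs : x ≤ s := by nlinarith
  set E := Real.exp (-x) with hE
  have hE0 : 0 < E := Real.exp_pos _
  have hE1 : E < 1 := by
    rw [hE]; exact Real.exp_lt_one_iff.mpr (by linarith)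
  have h1e_le : 1 - E ≤ x := by
    have := Real.add_one_le_exp (-x)
    rw [← hE] at this; linarith
  have hxe : x ≤ (1 - E) * (1 + s) := by
    have h2 : E * (1 + x) ≤ E * Real.exp x :=
      mul_le_mul_of_nonneg_left (by linarith [Real.add_one_le_exp x]) hE0.le
    have h3 : E * Real.exp x = 1 := by
      rw [hE, ← Real.exp_add]; simp
    nlinarith
  refine ⟨?_, ?_, ?_, ?_, ?_, ?_⟩
  · rw [div_le_div_iff₀ (by linarith) hs0]
    nlinarith [mul_le_mul_of_nonneg_left hxe hlam.le]
  · rw [div_le_iff₀ hs0]; nlinarith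
  · have h : (lam + mu * E) / s = 1 - mu * (1-E)/s := by field_simp; ring
    rw [h, sub_sub_cancel, div_le_div_iff₀ (by linarith) hs0]
    nlinarith [mul_le_mul_of_nonneg_left hxe hmu.le]
  · have h : (lam + mu * E) / s = 1 - mu * (1-E)/s := by field_simp; ring
    rw [h, sub_sub_cancel, div_le_iff₀ hs0]
    nlinarith
  · exact (div_le_div_iff_of_pos_right hs0).mpr (by nlinarith)
  · have h : (lam - lam * E) / s = 1 - (mu + lam*E)/s := by field_simp; ring
    rw [h, sub_sub_cancel]
    exact (div_le_div_iff_of_pos_right hs0).mpr (by nlinarith)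

lemma key_ub (a b v A1 A0 lq1 lq0 l1q1 l1q0 L K0 K1 C1 C0 : ℝ)
    (ha0 : 0 ≤ a) (ha1 : a ≤ 1) (hb0 : 0 ≤ b) (hb1 : b ≤ 1)
    (hA1a : v + lq1 ≤ A1) (hA1b : l1q1 ≤ A1)
    (hA0a : v + lq0 ≤ A0) (hA0b : l1q0 ≤ A0)
    (hlq1n : lq1 ≤ 0) (hlq1lb : -C1 ≤ lq1)
    (hl1q0n : l1q0 ≤ 0) (hl1q0lb : -C0 ≤ l1q0)
    (hr0ub : -lq0 ≤ L + K0) (hr1ub : -l1q1 ≤ L + K1)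
    (hK0 : 0 ≤ K0) (hK1 : 0 ≤ K1) (hC1 : 0 ≤ C1) (hC0 : 0 ≤ C0) :
    v * b - (a * A1 + (1 - a) * A0) ≤ |a - b| * L + (C1 + C0 + K0 + K1) := by
  have f3 : lq1 ≤ a * lq1 := by nlinarith
  have f4 : l1q0 ≤ (1 - a) * l1q0 := by nlinarith
  rcases le_total a b with hab | hab
  · rw [abs_of_nonpos (by linarith), neg_sub]
    by_cases hv : v ≤ -lq0
    · have e1 : a * (v + lq1) ≤ a * A1 := mul_le_mul_of_nonneg_left hA1a ha0
      have e2 : (1 - a) * l1q0 ≤ (1 - a) * A0 := mul_le_mul_of_nonneg_left hA0b (by linarith)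
      have p1 : v * (b - a) ≤ (-lq0) * (b - a) := mul_le_mul_of_nonneg_right hv (by linarith)
      have p2 : (-lq0) * (b - a) ≤ (L + K0) * (b - a) :=
        mul_le_mul_of_nonneg_right hr0ub (by linarith)
      have p3 : K0 * (b - a) ≤ K0 := by nlinarith
      linarith
    · push_neg at hv
      have e1 : a * (v + lq1) ≤ a * A1 := mul_le_mul_of_nonneg_left hA1a ha0
      have e2 : (1 - a) * (v + lq0) ≤ (1 - a) * A0 := mul_le_mul_of_nonneg_left hA0a (by linarith)
      have p1 : v * (b - 1) ≤ (-lq0) * (b - 1) := mul_le_mul_of_nonpos_right hv.le (by linarith)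
      have p2 : (-lq0) * (b - a) ≤ (L + K0) * (b - a) :=
        mul_le_mul_of_nonneg_right hr0ub (by linarith)
      have p3 : K0 * (b - a) ≤ K0 := by nlinarith
      linarith
  · rw [abs_of_nonneg (by linarith)]
    by_cases hv : -(-l1q1) ≤ v
    · have e1 : a * (v + lq1) ≤ a * A1 := mul_le_mul_of_nonneg_left hA1a ha0
      have e2 : (1 - a) * l1q0 ≤ (1 - a) * A0 := mul_le_mul_of_nonneg_left hA0b (by linarith)
      have p1 : v * (b - a) ≤ (-(-l1q1)) * (b - a) := mul_le_mul_of_nonpos_right hv (by linarith)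
      have p2 : (-l1q1) * (a - b) ≤ (L + K1) * (a - b) :=
        mul_le_mul_of_nonneg_right hr1ub (by linarith)
      have p3 : K1 * (a - b) ≤ K1 := by nlinarith
      linarith
    · push_neg at hv
      have e1 : a * l1q1 ≤ a * A1 := mul_le_mul_of_nonneg_left hA1b ha0
      have e2 : (1 - a) * l1q0 ≤ (1 - a) * A0 := mul_le_mul_of_nonneg_left hA0b (by linarith)
      have p1 : v * b ≤ l1q1 * b := mul_le_mul_of_nonneg_right (by linarith) hb0
      have p2 : (-l1q1) * (a - b) ≤ (L + K1) * (a - b) :=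
        mul_le_mul_of_nonneg_right hr1ub (by linarith)
      have p3 : K1 * (a - b) ≤ K1 := by nlinarith
      linarith

lemma I1_bounds (lam mu a b : ℝ) (hlam : 0 < lam) (hmu : 0 < mu)
    (ha : a ∈ Set.Icc (0:ℝ) 1) (hb : b ∈ Set.Icc (0:ℝ) 1) :
    ∃ C : ℝ, ∀ t : ℝ, 0 < t → t < 1 →
      |a - b| * (-Real.log t) - C ≤ I1 lam mu t a b
      ∧ I1 lam mu t a b ≤ |a - b| * (-Real.log t) + C := by
  obtain ⟨ha0, ha1⟩ := ha
  obtain ⟨hb0, hb1⟩ := hb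
  have hs0 : (0:ℝ) < lam + mu := by positivity
  have hK0 : 0 ≤ Real.log (1 + (lam+mu)) - Real.log lam := by
    have := Real.log_le_log hlam (by linarith : lam ≤ 1 + (lam+mu)); linarith
  have hK1 : 0 ≤ Real.log (1 + (lam+mu)) - Real.log mu := by
    have := Real.log_le_log hmu (by linarith : mu ≤ 1 + (lam+mu)); linarith
  have hC1 : 0 ≤ Real.log (lam+mu) - Real.log lam := by
    have := Real.log_le_log hlam (by linarith : lam ≤ lam+mu); linarith
  have hC0 : 0 ≤ Real.log (lam+mu) - Real.log mu := by
    have := Real.log_le_log hmu (by linarith : mu ≤ lam+mu); linarith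
  have hl2 : (0:ℝ) ≤ Real.log 2 := Real.log_nonneg one_le_two
  have hllam : (0:ℝ) ≤ Real.log (1 + lam) := Real.log_nonneg (by linarith)
  have hlmu : (0:ℝ) ≤ Real.log (1 + mu) := Real.log_nonneg (by linarith)
  refine ⟨Real.log 2 + Real.log (1+lam) + Real.log (1+mu) +
      (Real.log (lam+mu) - Real.log lam) + (Real.log (lam+mu) - Real.log mu) +
      (Real.log (1 + (lam+mu)) - Real.log lam) + (Real.log (1 + (lam+mu)) - Real.log mu), ?_⟩
  intro t ht0 ht1
  obtain ⟨h1, h2, h3, h4, h5, h6⟩ := pfacts lam mu t hlam hmu ht0 ht1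
  have hq0pos : 0 < p01 lam mu t := lt_of_lt_of_le (by positivity) h1
  have hq0lt1 : p01 lam mu t < 1 := by nlinarith [div_pos hmu hs0]
  have hq1pos : 0 < p11 lam mu t := lt_of_lt_of_le (div_pos hlam hs0) h5
  have h1q1pos : 0 < 1 - p11 lam mu t := lt_of_lt_of_le (by positivity) h3
  have hq1le1 : p11 lam mu t ≤ 1 := by linarith
  have hL0 : 0 < -Real.log t := by
    have := Real.log_neg ht0 ht1; linarith
  -- log bounds
  have hlogq0_lb : Real.log lam + Real.log t - Real.log (1+(lam+mu)) ≤ Real.log (p01 lam mu t) := by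
    have := Real.log_le_log (by positivity : (0:ℝ) < lam * t / (1 + (lam+mu))) h1
    rw [Real.log_div (by positivity) (by positivity), Real.log_mul hlam.ne' ht0.ne'] at this
    linarith
  have hlog1q1_lb : Real.log mu + Real.log t - Real.log (1+(lam+mu)) ≤
      Real.log (1 - p11 lam mu t) := by
    have := Real.log_le_log (by positivity : (0:ℝ) < mu * t / (1 + (lam+mu))) h3
    rw [Real.log_div (by positivity) (by positivity), Real.log_mul hmu.ne' ht0.ne'] at this
    linarith
  have hlogq1_lb : Real.log lam - Real.log (lam+mu) ≤ Real.log (p11 lam mu t) := by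
    have := Real.log_le_log (div_pos hlam hs0) h5
    rw [Real.log_div hlam.ne' hs0.ne'] at this; linarith
  have hlogq1_ub : Real.log (p11 lam mu t) ≤ 0 := Real.log_nonpos hq1pos.le hq1le1
  have hlog1q0_lb : Real.log mu - Real.log (lam+mu) ≤ Real.log (1 - p01 lam mu t) := by
    have := Real.log_le_log (div_pos hmu hs0) h6
    rw [Real.log_div hmu.ne' hs0.ne'] at this; linarith
  have hlog1q0_ub : Real.log (1 - p01 lam mu t) ≤ 0 :=
    Real.log_nonpos (by linarith) (by linarith)
  -- per-v upper bound
  have key : ∀ v : ℝ, v * b - Jfun lam mu t v a ≤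
      |a - b| * (-Real.log t) + ((Real.log (lam+mu) - Real.log lam) +
        (Real.log (lam+mu) - Real.log mu) + (Real.log (1 + (lam+mu)) - Real.log lam) +
        (Real.log (1 + (lam+mu)) - Real.log mu)) := by
    intro v
    have hJ : Jfun lam mu t v a =
        a * Real.log (1 - p11 lam mu t + Real.exp v * p11 lam mu t) +
        (1 - a) * Real.log (1 - p01 lam mu t + Real.exp v * p01 lam mu t) := rfl
    rw [hJ]
    exact key_ub a b v _ _ (Real.log (p11 lam mu t)) (Real.log (p01 lam mu t))
      (Real.log (1 - p11 lam mu t)) (Real.log (1 - p01 lam mu t)) (-Real.log t) _ _ _ _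
      ha0 ha1 hb0 hb1
      (log_mix_ge_left v _ hq1pos hq1le1) (log_mix_ge_right v _ hq1pos.le (by linarith))
      (log_mix_ge_left v _ hq0pos hq0lt1.le) (log_mix_ge_right v _ hq0pos.le hq0lt1)
      hlogq1_ub (by linarith) hlog1q0_ub (by linarith)
      (by linarith) (by linarith) hK0 hK1 hC1 hC0
  have hbdd : BddAbove (Set.range fun v : ℝ => v * b - Jfun lam mu t v a) := by
    refine ⟨|a - b| * (-Real.log t) + ((Real.log (lam+mu) - Real.log lam) +
        (Real.log (lam+mu) - Real.log mu) + (Real.log (1 + (lam+mu)) - Real.log lam) +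
        (Real.log (1 + (lam+mu)) - Real.log mu)), ?_⟩
    rintro y ⟨v, rfl⟩
    exact key v
  constructor
  · -- lower bound on I1: pick a good v
    rcases le_total a b with hab | hab
    · -- v0 = -log t
      have hv0 : Real.exp (-Real.log t) = t⁻¹ := by
        rw [Real.exp_neg, Real.exp_log ht0]
      have hti0 : (0:ℝ) < t⁻¹ := by positivity
      have hti : (1:ℝ) ≤ t⁻¹ := (one_le_inv₀ ht0).mpr ht1.le
      have hJ : Jfun lam mu t (-Real.log t) a =
          a * Real.log (1 - p11 lam mu t + t⁻¹ * p11 lam mu t) +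
          (1 - a) * Real.log (1 - p01 lam mu t + t⁻¹ * p01 lam mu t) := by
        have : Jfun lam mu t (-Real.log t) a =
            a * Real.log (1 - p11 lam mu t + Real.exp (-Real.log t) * p11 lam mu t) +
            (1 - a) * Real.log (1 - p01 lam mu t + Real.exp (-Real.log t) * p01 lam mu t) := rfl
        rw [this, hv0]
      have hA1ub : Real.log (1 - p11 lam mu t + t⁻¹ * p11 lam mu t) ≤
          Real.log 2 + (-Real.log t) := by
        have harg : 1 - p11 lam mu t + t⁻¹ * p11 lam mu t ≤ 2 * t⁻¹ := by
          have h7 : t⁻¹ * p11 lam mu t ≤ t⁻¹ * 1 := mul_le_mul_of_nonneg_left hq1le1 hti0.le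
          linarith
        have hpos : (0:ℝ) < 1 - p11 lam mu t + t⁻¹ * p11 lam mu t := by
          have := mul_pos hti0 hq1pos; linarith
        have := Real.log_le_log hpos harg
        rw [Real.log_mul two_ne_zero (by positivity), Real.log_inv] at this
        linarith
      have hA0ub : Real.log (1 - p01 lam mu t + t⁻¹ * p01 lam mu t) ≤ Real.log (1 + lam) := by
        apply Real.log_le_log (by nlinarith [mul_pos hti0 hq0pos])
        have h7 : t⁻¹ * p01 lam mu t ≤ t⁻¹ * (lam * t) :=
          mul_le_mul_of_nonneg_left h2 hti0.le
        have h8 : t⁻¹ * (lam * t) = lam := by field_simp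
        linarith
      have hle : (-Real.log t) * b - Jfun lam mu t (-Real.log t) a ≤ I1 lam mu t a b :=
        le_ciSup hbdd (-Real.log t)
      rw [hJ] at hle
      rw [abs_of_nonpos (by linarith), neg_sub]
      have e1 : a * Real.log (1 - p11 lam mu t + t⁻¹ * p11 lam mu t) ≤
          a * (Real.log 2 + (-Real.log t)) := mul_le_mul_of_nonneg_left hA1ub ha0
      have e2 : (1 - a) * Real.log (1 - p01 lam mu t + t⁻¹ * p01 lam mu t) ≤
          (1 - a) * Real.log (1 + lam) := mul_le_mul_of_nonneg_left hA0ub (by linarith)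
      have e3 : a * Real.log 2 ≤ Real.log 2 := by
        have := mul_le_mul_of_nonneg_right ha1 hl2; linarith
      have e4 : (1 - a) * Real.log (1 + lam) ≤ Real.log (1 + lam) := by
        have := mul_le_mul_of_nonneg_right (by linarith : 1 - a ≤ 1) hllam; linarith
      linarith
    · -- v0 = log t
      have hv0 : Real.exp (Real.log t) = t := Real.exp_log ht0
      have hJ : Jfun lam mu t (Real.log t) a =
          a * Real.log (1 - p11 lam mu t + t * p11 lam mu t) +
          (1 - a) * Real.log (1 - p01 lam mu t + t * p01 lam mu t) := by
        have : Jfun lam mu t (Real.log t) a =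
            a * Real.log (1 - p11 lam mu t + Real.exp (Real.log t) * p11 lam mu t) +
            (1 - a) * Real.log (1 - p01 lam mu t + Real.exp (Real.log t) * p01 lam mu t) := rfl
        rw [this, hv0]
      have hA1ub : Real.log (1 - p11 lam mu t + t * p11 lam mu t) ≤
          Real.log (1 + mu) + Real.log t := by
        have harg : 1 - p11 lam mu t + t * p11 lam mu t ≤ (1 + mu) * t := by
          have h7 : t * p11 lam mu t ≤ t * 1 := mul_le_mul_of_nonneg_left hq1le1 ht0.le
          linarith
        have hpos : (0:ℝ) < 1 - p11 lam mu t + t * p11 lam mu t := by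
          have := mul_pos ht0 hq1pos; linarith
        have := Real.log_le_log hpos harg
        rw [Real.log_mul (by positivity) ht0.ne'] at this
        linarith
      have hA0ub : Real.log (1 - p01 lam mu t + t * p01 lam mu t) ≤ 0 := by
        have hp1 : 0 < t * p01 lam mu t := mul_pos ht0 hq0pos
        have hp2 : t * p01 lam mu t ≤ p01 lam mu t :=
          mul_le_of_le_one_left hq0pos.le ht1.le
        exact Real.log_nonpos (by linarith) (by linarith)
      have hle : (Real.log t) * b - Jfun lam mu t (Real.log t) a ≤ I1 lam mu t a b :=
        le_ciSup hbdd (Real.log t)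
      rw [hJ] at hle
      rw [abs_of_nonneg (by linarith)]
      have e1 : a * Real.log (1 - p11 lam mu t + t * p11 lam mu t) ≤
          a * (Real.log (1 + mu) + Real.log t) := mul_le_mul_of_nonneg_left hA1ub ha0
      have e2 : (1 - a) * Real.log (1 - p01 lam mu t + t * p01 lam mu t) ≤ 0 :=
        mul_nonpos_of_nonneg_of_nonpos (by linarith) hA0ub
      have e3 : a * Real.log (1 + mu) ≤ Real.log (1 + mu) := by
        have := mul_le_mul_of_nonneg_right ha1 hlmu; linarith
      linarith
  · have hI : I1 lam mu t a b = ⨆ v : ℝ, (v * b - Jfun lam mu t v a) := rfl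
    rw [hI]
    apply ciSup_le
    intro v
    have hk := key v
    linarith

/-- Small-time asymptotics of the one-step rate function:
`I_{1,T}(a,b) / log(1/T) → |a − b|` as `T ↓ 0`. -/
theorem stmt_12 (lam mu : ℝ) (hlam : 0 < lam) (hmu : 0 < mu)
    (a b : ℝ) (ha : a ∈ Set.Icc (0:ℝ) 1) (hb : b ∈ Set.Icc (0:ℝ) 1) :
    Filter.Tendsto (fun T : ℝ => I1 lam mu T a b / Real.log (1 / T))
      (nhdsWithin 0 (Set.Ioi 0)) (nhds |a - b|) := by
  obtain ⟨C, hbd⟩ := I1_bounds lam mu a b hlam hmu ha hb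
  have hmem : Set.Ioo (0:ℝ) 1 ∈ nhdsWithin (0:ℝ) (Set.Ioi 0) :=
    Ioo_mem_nhdsGT one_pos
  have hlogtop : Tendsto (fun T : ℝ => -Real.log T) (nhdsWithin 0 (Set.Ioi 0)) atTop :=
    tendsto_neg_atBot_atTop.comp Real.tendsto_log_nhdsGT_zero
  have hinv : Tendsto (fun T : ℝ => (-Real.log T)⁻¹) (nhdsWithin 0 (Set.Ioi 0)) (nhds 0) :=
    hlogtop.inv_tendsto_atTop
  have hlow : Tendsto (fun T : ℝ => |a - b| - C * (-Real.log T)⁻¹)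
      (nhdsWithin 0 (Set.Ioi 0)) (nhds |a - b|) := by
    have h : Tendsto (fun T : ℝ => C * (-Real.log T)⁻¹) (nhdsWithin (0:ℝ) (Set.Ioi 0))
        (nhds 0) := by simpa using hinv.const_mul C
    simpa using h.const_sub |a - b|
  have hhigh : Tendsto (fun T : ℝ => |a - b| + C * (-Real.log T)⁻¹)
      (nhdsWithin 0 (Set.Ioi 0)) (nhds |a - b|) := by
    have h : Tendsto (fun T : ℝ => C * (-Real.log T)⁻¹) (nhdsWithin (0:ℝ) (Set.Ioi 0))
        (nhds 0) := by simpa using hinv.const_mul C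
    simpa using h.const_add |a - b|
  apply tendsto_of_tendsto_of_tendsto_of_le_of_le' hlow hhigh
  · filter_upwards [hmem] with T hT
    obtain ⟨hT0, hT1⟩ := hT
    have hL : 0 < -Real.log T := by have := Real.log_neg hT0 hT1; linarith
    have hlg : Real.log (1 / T) = -Real.log T := by rw [one_div, Real.log_inv]
    rw [hlg]
    have hne : Real.log T ≠ 0 := ne_of_lt (by linarith)
    have heq : |a - b| - C * (-Real.log T)⁻¹ = (|a - b| * (-Real.log T) - C) / (-Real.log T) := by
      field_simp
      ring
    rw [heq]
    exact (div_le_div_iff_of_pos_right hL).mpr (hbd T hT0 hT1).1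
  · filter_upwards [hmem] with T hT
    obtain ⟨hT0, hT1⟩ := hT
    have hL : 0 < -Real.log T := by have := Real.log_neg hT0 hT1; linarith
    have hlg : Real.log (1 / T) = -Real.log T := by rw [one_div, Real.log_inv]
    rw [hlg]
    have hne : Real.log T ≠ 0 := ne_of_lt (by linarith)
    have heq : |a - b| + C * (-Real.log T)⁻¹ = (|a - b| * (-Real.log T) + C) / (-Real.log T) := by
      field_simp
      ring
    rw [heq]
    exact (div_le_div_iff_of_pos_right hL).mpr (hbd T hT0 hT1).2
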